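/- For any Q ∈ SO(3), the matrix C(Q) = ½(tr(Q)·I − Q) has operator 2-norm at most 1, i.e., ‖C(Q)x‖ ≤ ‖x‖ for all x ∈ ℝ³. -/

import Mathlib

open Matrix Real

noncomputable def hat (v : Fin 3 → ℝ) : Matrix (Fin 3) (Fin 3) ℝ :=
  !![0, -v 2, v 1; v 2, 0, -v 0; -v 1, v 0, 0]

noncomputable def vee (A : Matrix (Fin 3) (Fin 3) ℝ) : Fin 3 → ℝ := ![A 2 1, A 0 2, A 1 0]

/-- Frobenius norm of a 3×3 real matrix: ‖A‖ = √(tr(Aᵀ A)). -/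
noncomputable def fnorm (A : Matrix (Fin 3) (Fin 3) ℝ) : ℝ := Real.sqrt ((Aᵀ * A).trace)

/-- Euclidean norm on ℝ³. -/
noncomputable def enorm (v : Fin 3 → ℝ) : ℝ := Real.sqrt (v ⬝ᵥ v)

/-- The special orthogonal group SO(3). -/
def SO3 (R : Matrix (Fin 3) (Fin 3) ℝ) : Prop := Rᵀ * R = 1 ∧ R.det = 1

lemma key2 (t n u s : ℝ) (hn0 : 0 ≤ n) (hF1a : u ≤ n) (hF1b : -n ≤ u)
    (ht3 : t ≤ 3) (ht1 : -1 ≤ t)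
    (hP : (t + 1) * (2 * u - (t - 1) * n) = s ^ 2) :
    t ^ 2 * n - 2 * t * u + n ≤ 4 * n := by
  have hF2 : 0 ≤ 2 * u - (t - 1) * n := by
    rcases eq_or_lt_of_le ht1 with h | h
    · have h1 : t = -1 := h.symm
      subst h1; linarith
    · nlinarith [hP, sq_nonneg s, h]
  rcases le_or_gt 0 t with h | h
  · nlinarith [mul_nonneg h hF2, mul_nonneg (by linarith : (0:ℝ) ≤ 3 - t) hn0]
  · nlinarith [mul_nonneg (by linarith : (0:ℝ) ≤ -t) (by linarith : (0:ℝ) ≤ n - u),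
      mul_nonneg (by linarith : (0:ℝ) ≤ 3 - t) (mul_nonneg (by linarith : (0:ℝ) ≤ 1 + t) hn0)]

lemma aux_t3 (q00 q10 q20 q01 q11 q21 q02 q12 q22 : ℝ)
    (hc00 : q00 * q00 + q10 * q10 + q20 * q20 = 1)
    (hc11 : q01 * q01 + q11 * q11 + q21 * q21 = 1)
    (hc22 : q02 * q02 + q12 * q12 + q22 * q22 = 1) :
    (q00 + q11 + q22) ≤ 3 := by
  nlinarith [hc00, hc11, hc22, sq_nonneg (q00 - 1), sq_nonneg (q11 - 1), sq_nonneg (q22 - 1),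
    sq_nonneg q10, sq_nonneg q20, sq_nonneg q01, sq_nonneg q21, sq_nonneg q02, sq_nonneg q12]

lemma aux_t1 (q00 q01 q02 q10 q11 q12 q20 q21 q22 : ℝ)
    (hw : (q21 - q12) ^ 2 + (q02 - q20) ^ 2 + (q10 - q01) ^ 2
        = (3 - (q00 + q11 + q22)) * (1 + (q00 + q11 + q22))) :
    -1 ≤ (q00 + q11 + q22) := by
  nlinarith [hw, sq_nonneg (q21 - q12), sq_nonneg (q02 - q20), sq_nonneg (q10 - q01)]

lemma key_ineq (q00 q01 q02 q10 q11 q12 q20 q21 q22 x0 x1 x2 : ℝ)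
    (hc00 : q00 * q00 + q10 * q10 + q20 * q20 = 1)
    (hc01 : q00 * q01 + q10 * q11 + q20 * q21 = 0)
    (hc02 : q00 * q02 + q10 * q12 + q20 * q22 = 0)
    (hc11 : q01 * q01 + q11 * q11 + q21 * q21 = 1)
    (hc12 : q01 * q02 + q11 * q12 + q21 * q22 = 0)
    (hc22 : q02 * q02 + q12 * q12 + q22 * q22 = 1)
    (hr00 : q00 * q00 + q01 * q01 + q02 * q02 = 1)
    (hr01 : q00 * q10 + q01 * q11 + q02 * q12 = 0)
    (hr02 : q00 * q20 + q01 * q21 + q02 * q22 = 0)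
    (hr11 : q10 * q10 + q11 * q11 + q12 * q12 = 1)
    (hr12 : q10 * q20 + q11 * q21 + q12 * q22 = 0)
    (hr22 : q20 * q20 + q21 * q21 + q22 * q22 = 1)
    (hm00 : q00 * q00 + q01 * q10 + q02 * q20 = (q00 + q11 + q22) * q00 - (q00 + q11 + q22) * 1 + q00)
    (hm01 : q00 * q01 + q01 * q11 + q02 * q21 = (q00 + q11 + q22) * q01 - (q00 + q11 + q22) * 0 + q10)
    (hm02 : q00 * q02 + q01 * q12 + q02 * q22 = (q00 + q11 + q22) * q02 - (q00 + q11 + q22) * 0 + q20)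
    (hm10 : q10 * q00 + q11 * q10 + q12 * q20 = (q00 + q11 + q22) * q10 - (q00 + q11 + q22) * 0 + q01)
    (hm11 : q10 * q01 + q11 * q11 + q12 * q21 = (q00 + q11 + q22) * q11 - (q00 + q11 + q22) * 1 + q11)
    (hm12 : q10 * q02 + q11 * q12 + q12 * q22 = (q00 + q11 + q22) * q12 - (q00 + q11 + q22) * 0 + q21)
    (hm20 : q20 * q00 + q21 * q10 + q22 * q20 = (q00 + q11 + q22) * q20 - (q00 + q11 + q22) * 0 + q02)
    (hm21 : q20 * q01 + q21 * q11 + q22 * q21 = (q00 + q11 + q22) * q21 - (q00 + q11 + q22) * 0 + q12)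
    (hm22 : q20 * q02 + q21 * q12 + q22 * q22 = (q00 + q11 + q22) * q22 - (q00 + q11 + q22) * 1 + q22)
    : ((q00 + q11 + q22) * x0 - (q00 * x0 + q01 * x1 + q02 * x2)) ^ 2 + ((q00 + q11 + q22) * x1 - (q10 * x0 + q11 * x1 + q12 * x2)) ^ 2 + ((q00 + q11 + q22) * x2 - (q20 * x0 + q21 * x1 + q22 * x2)) ^ 2 ≤ 4 * (x0 ^ 2 + x1 ^ 2 + x2 ^ 2) := by
  have hn0 : (0:ℝ) ≤ (x0 ^ 2 + x1 ^ 2 + x2 ^ 2) := by positivity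
  have hyy : (q00 * x0 + q01 * x1 + q02 * x2) ^ 2 + (q10 * x0 + q11 * x1 + q12 * x2) ^ 2 + (q20 * x0 + q21 * x1 + q22 * x2) ^ 2 = (x0 ^ 2 + x1 ^ 2 + x2 ^ 2) := by
    linear_combination x0 * x0 * hc00 + x0 * x1 * hc01 + x0 * x2 * hc02 + x1 * x0 * hc01 + x1 * x1 * hc11 + x1 * x2 * hc12 + x2 * x0 * hc02 + x2 * x1 * hc12 + x2 * x2 * hc22
  have hw : (q21 - q12) ^ 2 + (q02 - q20) ^ 2 + (q10 - q01) ^ 2 = (3 - (q00 + q11 + q22)) * (1 + (q00 + q11 + q22)) := by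
    linear_combination hr00 + hr11 + hr22 - hm00 - hm11 - hm22
  have hP : ((q00 + q11 + q22) + 1) * (2 * (x0 * (q00 * x0 + q01 * x1 + q02 * x2) + x1 * (q10 * x0 + q11 * x1 + q12 * x2) + x2 * (q20 * x0 + q21 * x1 + q22 * x2)) - ((q00 + q11 + q22) - 1) * (x0 ^ 2 + x1 ^ 2 + x2 ^ 2)) = ((q21 - q12) * x0 + (q02 - q20) * x1 + (q10 - q01) * x2) ^ 2 := by
    linear_combination (-2 : ℝ) * x0 * x0 * hm00 + x0 * x0 * hr00 + x0 * x0 * hc00 + (-2 : ℝ) * x0 * x1 * hm01 + x0 * x1 * hr01 + x0 * x1 * hc01 + (-2 : ℝ) * x0 * x2 * hm02 + x0 * x2 * hr02 + x0 * x2 * hc02 + (-2 : ℝ) * x1 * x0 * hm10 + x1 * x0 * hr01 + x1 * x0 * hc01 + (-2 : ℝ) * x1 * x1 * hm11 + x1 * x1 * hr11 + x1 * x1 * hc11 + (-2 : ℝ) * x1 * x2 * hm12 + x1 * x2 * hr12 + x1 * x2 * hc12 + (-2 : ℝ) * x2 * x0 * hm20 + x2 * x0 * hr02 + x2 * x0 *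 hc02 + (-2 : ℝ) * x2 * x1 * hm21 + x2 * x1 * hr12 + x2 * x1 * hc12 + (-2 : ℝ) * x2 * x2 * hm22 + x2 * x2 * hr22 + x2 * x2 * hc22 + - (x0 ^ 2 + x1 ^ 2 + x2 ^ 2) * hr00 - (x0 ^ 2 + x1 ^ 2 + x2 ^ 2) * hr11 - (x0 ^ 2 + x1 ^ 2 + x2 ^ 2) * hr22 + (x0 ^ 2 + x1 ^ 2 + x2 ^ 2) * hm00 + (x0 ^ 2 + x1 ^ 2 + x2 ^ 2) * hm11 + (x0 ^ 2 + x1 ^ 2 + x2 ^ 2) * hm22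
  have hsa : (x0 - (q00 * x0 + q01 * x1 + q02 * x2)) ^ 2 + (x1 - (q10 * x0 + q11 * x1 + q12 * x2)) ^ 2 + (x2 - (q20 * x0 + q21 * x1 + q22 * x2)) ^ 2 = 2 * (x0 ^ 2 + x1 ^ 2 + x2 ^ 2) - 2 * (x0 * (q00 * x0 + q01 * x1 + q02 * x2) + x1 * (q10 * x0 + q11 * x1 + q12 * x2) + x2 * (q20 * x0 + q21 * x1 + q22 * x2)) := by
    linear_combination hyy
  have hsb : (x0 + (q00 * x0 + q01 * x1 + q02 * x2)) ^ 2 + (x1 + (q10 * x0 + q11 * x1 + q12 * x2)) ^ 2 + (x2 + (q20 * x0 + q21 * x1 + q22 * x2)) ^ 2 = 2 * (x0 ^ 2 + x1 ^ 2 + x2 ^ 2) + 2 * (x0 * (q00 * x0 + q01 * x1 + q02 * x2) + x1 * (q10 * x0 + q11 * x1 + q12 * x2) + x2 * (q20 * x0 + q21 * x1 + q22 * x2)) := by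
    linear_combination hyy
  have hF1a : (x0 * (q00 * x0 + q01 * x1 + q02 * x2) + x1 * (q10 * x0 + q11 * x1 + q12 * x2) + x2 * (q20 * x0 + q21 * x1 + q22 * x2)) ≤ (x0 ^ 2 + x1 ^ 2 + x2 ^ 2) := by
    linarith [hsa, sq_nonneg (x0 - (q00 * x0 + q01 * x1 + q02 * x2)), sq_nonneg (x1 - (q10 * x0 + q11 * x1 + q12 * x2)), sq_nonneg (x2 - (q20 * x0 + q21 * x1 + q22 * x2))]
  have hF1b : -(x0 ^ 2 + x1 ^ 2 + x2 ^ 2) ≤ (x0 * (q00 * x0 + q01 * x1 + q02 * x2) + x1 * (q10 * x0 + q11 * x1 + q12 * x2) + x2 * (q20 * x0 + q21 * x1 + q22 * x2)) := by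
    linarith [hsb, sq_nonneg (x0 + (q00 * x0 + q01 * x1 + q02 * x2)), sq_nonneg (x1 + (q10 * x0 + q11 * x1 + q12 * x2)), sq_nonneg (x2 + (q20 * x0 + q21 * x1 + q22 * x2))]
  have ht3 : (q00 + q11 + q22) ≤ 3 := aux_t3 q00 q10 q20 q01 q11 q21 q02 q12 q22 hc00 hc11 hc22
  have ht1 : -1 ≤ (q00 + q11 + q22) := aux_t1 q00 q01 q02 q10 q11 q12 q20 q21 q22 hw
  have hkey := key2 (q00 + q11 + q22) (x0 ^ 2 + x1 ^ 2 + x2 ^ 2) (x0 * (q00 * x0 + q01 * x1 + q02 * x2) + x1 * (q10 * x0 + q11 * x1 + q12 * x2) + x2 * (q20 * x0 + q21 * x1 + q22 * x2)) ((q21 - q12) * x0 + (q02 - q20) * x1 + (q10 - q01) * x2) hn0 hF1a hF1b ht3 ht1 hP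
  have hexp : ((q00 + q11 + q22) * x0 - (q00 * x0 + q01 * x1 + q02 * x2)) ^ 2 + ((q00 + q11 + q22) * x1 - (q10 * x0 + q11 * x1 + q12 * x2)) ^ 2 + ((q00 + q11 + q22) * x2 - (q20 * x0 + q21 * x1 + q22 * x2)) ^ 2 = (q00 + q11 + q22) ^ 2 * (x0 ^ 2 + x1 ^ 2 + x2 ^ 2) - 2 * (q00 + q11 + q22) * (x0 * (q00 * x0 + q01 * x1 + q02 * x2) + x1 * (q10 * x0 + q11 * x1 + q12 * x2) + x2 * (q20 * x0 + q21 * x1 + q22 * x2)) + (x0 ^ 2 + x1 ^ 2 + x2 ^ 2) := by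
    linear_combination hyy
  rw [hexp]
  exact hkey

lemma adj3 (A : Matrix (Fin 3) (Fin 3) ℝ) :
    A.adjugate = A * A - A.trace • A + (A.adjugate).trace • (1 : Matrix (Fin 3) (Fin 3) ℝ) := by
  ext i j
  fin_cases i <;> fin_cases j <;>
    simp [Matrix.adjugate_fin_three, Matrix.trace_fin_three, Matrix.mul_apply,
      Fin.sum_univ_three, Matrix.one_apply] <;> ring

theorem C_matrix_norm_le_one (Q : Matrix (Fin 3) (Fin 3) ℝ) (hQ : SO3 Q) (x : Fin 3 → ℝ) :
    _root_.enorm ((((1 / 2 : ℝ) • (Q.trace • (1 : Matrix (Fin 3) (Fin 3) ℝ) - Q)).mulVec x)) ≤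
      _root_.enorm x := by
  obtain ⟨h1, h2⟩ := hQ
  have h1' : Q * Qᵀ = 1 := mul_eq_one_comm.mp h1
  have hadj : Q.adjugate = Qᵀ := by
    calc Q.adjugate = 1 * Q.adjugate := (Matrix.one_mul _).symm
      _ = (Qᵀ * Q) * Q.adjugate := by rw [h1]
      _ = Qᵀ * (Q * Q.adjugate) := Matrix.mul_assoc _ _ _
      _ = Qᵀ * ((1:ℝ) • 1) := by rw [Matrix.mul_adjugate, h2]
      _ = Qᵀ := by rw [one_smul, Matrix.mul_one]
  have hCH : Q * Q = Q.trace • Q - Q.trace • (1 : Matrix (Fin 3) (Fin 3) ℝ) + Qᵀ := by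
    have h3 := adj3 Q
    rw [hadj, Matrix.trace_transpose] at h3
    rw [h3]; abel
  have ec : ∀ i j, Q 0 i * Q 0 j + Q 1 i * Q 1 j + Q 2 i * Q 2 j
      = if i = j then 1 else 0 := by
    intro i j
    have e := congrFun (congrFun h1 i) j
    simpa [Matrix.mul_apply, Matrix.transpose_apply, Fin.sum_univ_three, Matrix.one_apply] using e
  have er : ∀ i j, Q i 0 * Q j 0 + Q i 1 * Q j 1 + Q i 2 * Q j 2
      = if i = j then 1 else 0 := by
    intro i j
    have e := congrFun (congrFun h1' i) j
    simpa [Matrix.mul_apply, Matrix.transpose_apply, Fin.sum_univ_three, Matrix.one_apply] using e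
  have em : ∀ i j, Q i 0 * Q 0 j + Q i 1 * Q 1 j + Q i 2 * Q 2 j
      = (Q 0 0 + Q 1 1 + Q 2 2) * Q i j
        - (Q 0 0 + Q 1 1 + Q 2 2) * (if i = j then 1 else 0) + Q j i := by
    intro i j
    have e := congrFun (congrFun hCH i) j
    simpa [Matrix.mul_apply, Fin.sum_univ_three, Matrix.one_apply, Matrix.trace_fin_three,
      Matrix.smul_apply, Matrix.sub_apply, Matrix.add_apply, Matrix.transpose_apply,
      smul_eq_mul, mul_comm] using e
  have key := key_ineq (Q 0 0) (Q 0 1) (Q 0 2) (Q 1 0) (Q 1 1) (Q 1 2) (Q 2 0) (Q 2 1) (Q 2 2)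
    (x 0) (x 1) (x 2)
    (by simpa using ec 0 0) (by simpa using ec 0 1) (by simpa using ec 0 2)
    (by simpa using ec 1 1) (by simpa using ec 1 2) (by simpa using ec 2 2)
    (by simpa using er 0 0) (by simpa using er 0 1) (by simpa using er 0 2)
    (by simpa using er 1 1) (by simpa using er 1 2) (by simpa using er 2 2)
    (by simpa using em 0 0) (by simpa using em 0 1) (by simpa using em 0 2)
    (by simpa using em 1 0) (by simpa using em 1 1) (by simpa using em 1 2)
    (by simpa using em 2 0) (by simpa using em 2 1) (by simpa using em 2 2)
  unfold _root_.enorm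
  apply Real.sqrt_le_sqrt
  simp only [Matrix.mulVec, dotProduct, Fin.sum_univ_three, Matrix.smul_apply,
    Matrix.sub_apply, Matrix.one_apply, Matrix.trace_fin_three, smul_eq_mul,
    Fin.isValue, if_true, if_false]
  norm_num [Fin.ext_iff]
  nlinarith [key]
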